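/- In a cyclic operad, total compositions compose: let f ∈ C(X), φ : x ↦ (g_x, x̲) with g_x ∈ C(Y_x), and ψ : y ↦ (h_y, y̲) an assignment on ⋃_{x∈X}(Y_x\{x̲}) such that the iterated total composition f(φ)(ψ) is defined. Define φ_ψ : x ↦ (g_x^{ψ_{x̲}}, x̲), where ψ_{x̲} extends ψ restricted to Y_x\{x̲} by the identity on x̲ (composing g_x with the h_y's, y ∈ Y_x\{x̲}). Then f(φ)(ψ) = f(φ_ψ). -/

import Mathlib

/-- A (non-skeletal, entries-only) cyclic operad, presented in a "flattened" style:
operations carry a finite set of entry names (`fv`), bijections of variables act via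
global permutations of ℕ, there are binary units `unit x y` and partial compositions
`comp f x y g` (= f ∘_{x,y} g), subject to the axioms (A1), (A2), (EQ), (U1)–(U3) of
Definition 1.  Here `ren ρ f` corresponds to `f^{ρ⁻¹}` of the paper. -/
structure CyclicOperad where
  Op : Type
  fv : Op → Finset ℕ
  ren : (ℕ ≃ ℕ) → Op → Op
  fv_ren : ∀ (ρ : ℕ ≃ ℕ) (f : Op), fv (ren ρ f) = (fv f).image ρ
  ren_id : ∀ f, ren (Equiv.refl ℕ) f = f
  ren_comp : ∀ ρ τ f, ren ρ (ren τ f) = ren (τ.trans ρ) f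
  unit : ℕ → ℕ → Op
  fv_unit : ∀ x y, x ≠ y → fv (unit x y) = {x, y}
  comp : Op → ℕ → ℕ → Op → Op
  fv_comp : ∀ f x y g, x ∈ fv f → y ∈ fv g →
      Disjoint ((fv f).erase x) ((fv g).erase y) →
      fv (comp f x y g) = (fv f).erase x ∪ (fv g).erase y
  A1 : ∀ f g h x y u z, x ∈ fv f → y ∈ fv g → u ∈ fv g → z ∈ fv h → y ≠ u →
      Disjoint ((fv f).erase x) ((fv g).erase y) →
      Disjoint ((fv g).erase u) ((fv h).erase z) →
      Disjoint ((fv f).erase x) ((fv h).erase z) →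
      comp (comp f x y g) u z h = comp f x y (comp g u z h)
  A2 : ∀ f g h x y u z, x ∈ fv f → u ∈ fv f → x ≠ u → y ∈ fv g → z ∈ fv h →
      Disjoint ((fv f).erase x) ((fv g).erase y) →
      Disjoint ((fv f).erase u) ((fv h).erase z) →
      Disjoint ((fv g).erase y) ((fv h).erase z) →
      comp (comp f x y g) u z h = comp (comp f u z h) x y g
  EQ : ∀ (ρ₁ ρ₂ ρ : ℕ ≃ ℕ) f g x y, x ∈ fv f → y ∈ fv g →
      Disjoint ((fv f).erase x) ((fv g).erase y) →
      Disjoint ((fv (ren ρ₁ f)).erase (ρ₁ x)) ((fv (ren ρ₂ g)).erase (ρ₂ y)) →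
      (∀ v ∈ (fv f).erase x, ρ v = ρ₁ v) →
      (∀ v ∈ (fv g).erase y, ρ v = ρ₂ v) →
      comp (ren ρ₁ f) (ρ₁ x) (ρ₂ y) (ren ρ₂ g) = ren ρ (comp f x y g)
  U1 : ∀ f x y z, x ∈ fv f → y ≠ z → y ∉ (fv f).erase x → z ∉ fv f →
      comp f x y (unit y z) = ren (Equiv.swap x z) f
  U2 : ∀ f x y z, x ∈ fv f → y ≠ z → y ∉ (fv f).erase x → z ∉ fv f →
      comp (unit y z) y x f = ren (Equiv.swap x z) f
  U3 : ∀ (ρ : ℕ ≃ ℕ) x y, x ≠ y → ren ρ (unit x y) = unit (ρ x) (ρ y)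

/-- The total composition `f(φ)` determined by `f` and the assignment
`φ : x ↦ (g x, b x)`, computed along an enumeration `xs` of the entries of `f`. -/
def totalComp (O : CyclicOperad) (f : O.Op) (g : ℕ → O.Op) (b : ℕ → ℕ)
    (xs : List ℕ) : O.Op :=
  xs.foldl (fun acc x => O.comp acc x (b x) (g x)) f

lemma totalComp_nil (O : CyclicOperad) (f : O.Op) (g : ℕ → O.Op) (b : ℕ → ℕ) :
    totalComp O f g b [] = f := rfl

lemma totalComp_cons (O : CyclicOperad) (f : O.Op) (g : ℕ → O.Op) (b : ℕ → ℕ)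
    (x : ℕ) (xs : List ℕ) :
    totalComp O f g b (x :: xs) = totalComp O (O.comp f x (b x) (g x)) g b xs := rfl

lemma fv_totalComp (O : CyclicOperad) (h : ℕ → O.Op) (c : ℕ → ℕ) :
    ∀ (l : List ℕ) (F : O.Op), l.Nodup →
      (∀ y ∈ l, y ∈ O.fv F) → (∀ y ∈ l, c y ∈ O.fv (h y)) →
      List.Pairwise (fun y y' =>
        Disjoint ((O.fv (h y)).erase (c y)) ((O.fv (h y')).erase (c y'))) l →
      (∀ y ∈ l, Disjoint ((O.fv (h y)).erase (c y)) ((O.fv F).erase y)) →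
      O.fv (totalComp O F h c l)
        = (O.fv F \ l.toFinset) ∪ l.toFinset.biUnion (fun y => (O.fv (h y)).erase (c y))
  | [], F, _, _, _, _, _ => by simp [totalComp]
  | y :: l, F, hnd, hmem, hc, hp, hdis => by
    obtain ⟨hyl, hnd'⟩ := List.nodup_cons.mp hnd
    have hyF : y ∈ O.fv F := hmem y (by simp)
    have hcy : c y ∈ O.fv (h y) := hc y (by simp)
    have hfv : O.fv (O.comp F y (c y) (h y))
        = (O.fv F).erase y ∪ (O.fv (h y)).erase (c y) :=
      O.fv_comp _ _ _ _ hyF hcy (hdis y (by simp)).symm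
    have hmem' : ∀ y' ∈ l, y' ∈ O.fv (O.comp F y (c y) (h y)) := by
      intro y' hy'; rw [hfv]
      exact Finset.mem_union_left _ (Finset.mem_erase.mpr
        ⟨fun e => hyl (e ▸ hy'), hmem y' (by simp [hy'])⟩)
    have hdis' : ∀ y' ∈ l, Disjoint ((O.fv (h y')).erase (c y'))
        ((O.fv (O.comp F y (c y) (h y))).erase y') := by
      intro y' hy'
      rw [hfv, Finset.disjoint_right]
      intro v hv
      rcases Finset.mem_erase.mp hv with ⟨hvy', hv2⟩
      rcases Finset.mem_union.mp hv2 with hv3 | hv3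
      · exact fun hvin => Finset.disjoint_right.mp (hdis y' (by simp [hy']))
          (Finset.mem_erase.mpr ⟨hvy', (Finset.mem_erase.mp hv3).2⟩) hvin
      · exact fun hvin => Finset.disjoint_left.mp
          ((List.rel_of_pairwise_cons hp hy')) hv3 hvin
    have ih := fv_totalComp O h c l (O.comp F y (c y) (h y)) hnd' hmem'
      (fun y' hy' => hc y' (by simp [hy'])) (hp.of_cons) hdis'
    rw [totalComp_cons, ih, hfv]
    have hSL : ∀ v, v ∈ (O.fv (h y)).erase (c y) → v ∉ l.toFinset := by
      intro v hv hvl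
      have hvl' := List.mem_toFinset.mp hvl
      exact Finset.disjoint_left.mp (hdis y (by simp)) hv
        (Finset.mem_erase.mpr ⟨fun e => hyl (e ▸ hvl'), hmem v (by simp [hvl'])⟩)
    rw [List.toFinset_cons, Finset.biUnion_insert, Finset.union_sdiff_distrib,
      Finset.sdiff_eq_self_of_disjoint (Finset.disjoint_left.mpr hSL),
      Finset.erase_eq, sdiff_sdiff_left, Finset.sup_eq_union, ← Finset.insert_eq, Finset.union_assoc]

lemma totalComp_perm (O : CyclicOperad) (h : ℕ → O.Op) (c : ℕ → ℕ) :
    ∀ {l₁ l₂ : List ℕ}, l₁.Perm l₂ → ∀ (F : O.Op), l₁.Nodup →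
      (∀ y ∈ l₁, y ∈ O.fv F) → (∀ y ∈ l₁, c y ∈ O.fv (h y)) →
      List.Pairwise (fun y y' =>
        Disjoint ((O.fv (h y)).erase (c y)) ((O.fv (h y')).erase (c y'))) l₁ →
      (∀ y ∈ l₁, Disjoint ((O.fv (h y)).erase (c y)) ((O.fv F).erase y)) →
      totalComp O F h c l₁ = totalComp O F h c l₂ := by
  intro l₁ l₂ hp
  induction hp with
  | nil => intro F _ _ _ _ _; rfl
  | cons x hp ih =>
      intro F hnd hmem hc' hpw hdis
      obtain ⟨hxl, hnd'⟩ := List.nodup_cons.mp hnd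
      have hxF := hmem x (by simp)
      have hcx := hc' x (by simp)
      have hfv : O.fv (O.comp F x (c x) (h x))
          = (O.fv F).erase x ∪ (O.fv (h x)).erase (c x) :=
        O.fv_comp _ _ _ _ hxF hcx (hdis x (by simp)).symm
      rw [totalComp_cons, totalComp_cons]
      refine ih _ hnd' ?_ (fun y hy => hc' y (by simp [hy])) hpw.of_cons ?_
      · intro y hy; rw [hfv]
        exact Finset.mem_union_left _ (Finset.mem_erase.mpr
          ⟨fun e => hxl (e ▸ hy), hmem y (by simp [hy])⟩)
      · intro y hy; rw [hfv, Finset.disjoint_right]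
        intro v hv
        rcases Finset.mem_erase.mp hv with ⟨hvy, hv2⟩
        rcases Finset.mem_union.mp hv2 with hv3 | hv3
        · exact fun hvin => Finset.disjoint_right.mp (hdis y (by simp [hy]))
            (Finset.mem_erase.mpr ⟨hvy, (Finset.mem_erase.mp hv3).2⟩) hvin
        · exact fun hvin => Finset.disjoint_left.mp
            (List.rel_of_pairwise_cons hpw hy) hv3 hvin
  | swap x y l =>
      intro F hnd hmem hc' hpw hdis
      have hyF := hmem y (by simp)
      have hxF := hmem x (by simp)
      have hxy : y ≠ x := by
        intro e; rw [List.nodup_cons] at hnd; exact hnd.1 (by simp [e])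
      have hcy := hc' y (by simp)
      have hcx := hc' x (by simp)
      have hdisyx : Disjoint ((O.fv (h y)).erase (c y)) ((O.fv (h x)).erase (c x)) :=
        List.rel_of_pairwise_cons hpw (by simp)
      rw [totalComp_cons, totalComp_cons, totalComp_cons, totalComp_cons,
        O.A2 F (h y) (h x) y (c y) x (c x) hyF hxF hxy hcy hcx
          (hdis y (by simp)).symm (hdis x (by simp)).symm hdisyx]
  | trans hp₁ hp₂ ih₁ ih₂ =>
      intro F hnd hmem hc' hpw hdis
      rw [ih₁ F hnd hmem hc' hpw hdis]
      exact ih₂ F (hp₁.nodup hnd)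
        (fun y hy => hmem y (hp₁.mem_iff.mpr hy))
        (fun y hy => hc' y (hp₁.mem_iff.mpr hy))
        ((hp₁.pairwise_iff (fun hab => hab.symm)).mp hpw)
        (fun y hy => hdis y (hp₁.mem_iff.mpr hy))

lemma comp_totalComp_swap (O : CyclicOperad) (g : ℕ → O.Op) (b : ℕ → ℕ)
    (H : O.Op) (y cy : ℕ) :
    ∀ (xs : List ℕ) (F : O.Op), xs.Nodup →
      List.Pairwise (fun x x' =>
        Disjoint ((O.fv (g x)).erase (b x)) ((O.fv (g x')).erase (b x'))) xs →
      (∀ x ∈ xs, x ∈ O.fv F) → (∀ x ∈ xs, b x ∈ O.fv (g x)) →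
      (∀ x ∈ xs, Disjoint (O.fv F) ((O.fv (g x)).erase (b x))) →
      (∀ x ∈ xs, Disjoint ((O.fv H).erase cy) ((O.fv (g x)).erase y)) →
      y ∈ O.fv F → y ∉ xs → cy ∈ O.fv H →
      Disjoint ((O.fv H).erase cy) ((O.fv F).erase y) →
      O.comp (totalComp O F g b xs) y cy H = totalComp O (O.comp F y cy H) g b xs
  | [], F, _, _, _, _, _, _, _, _, _, _ => rfl
  | x :: xs, F, hnd, hpw, hmem, hb, hdF, hdH, hyF, hyxs, hcy, hdHF => by
    obtain ⟨hxl, hnd'⟩ := List.nodup_cons.mp hnd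
    have hxF := hmem x (by simp)
    have hbx := hb x (by simp)
    have hyx : y ≠ x := fun e => hyxs (by simp [e])
    have hdFx : Disjoint (O.fv F) ((O.fv (g x)).erase (b x)) := hdF x (by simp)
    have hynotg : y ∉ (O.fv (g x)).erase (b x) := Finset.disjoint_left.mp hdFx hyF
    have hdgH : Disjoint ((O.fv (g x)).erase (b x)) ((O.fv H).erase cy) := by
      rw [Finset.disjoint_left]
      intro v hv hvH
      rcases Finset.mem_erase.mp hv with ⟨hvbx, hvg⟩
      have hvy : v ≠ y := fun e => hynotg (e ▸ hv)
      exact Finset.disjoint_left.mp (hdH x (by simp)) hvH (Finset.mem_erase.mpr ⟨hvy, hvg⟩)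
    have hfv : O.fv (O.comp F x (b x) (g x))
        = (O.fv F).erase x ∪ (O.fv (g x)).erase (b x) :=
      O.fv_comp _ _ _ _ hxF hbx (hdFx.mono_left (Finset.erase_subset _ _))
    rw [totalComp_cons, totalComp_cons]
    rw [comp_totalComp_swap O g b H y cy xs (O.comp F x (b x) (g x)) hnd' hpw.of_cons
      ?_ (fun x' hx' => hb x' (by simp [hx'])) ?_
      (fun x' hx' => hdH x' (by simp [hx'])) ?_ (fun hy => hyxs (by simp [hy])) hcy ?_]
    · rw [O.A2 F (g x) H x (b x) y cy hxF hyF (fun e => hyx e.symm) hbx hcy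
        (hdFx.mono_left (Finset.erase_subset _ _))
        hdHF.symm hdgH]
    · intro x' hx'; rw [hfv]
      exact Finset.mem_union_left _ (Finset.mem_erase.mpr
        ⟨fun e => hxl (e ▸ hx'), hmem x' (by simp [hx'])⟩)
    · intro x' hx'; rw [hfv, Finset.disjoint_left]
      intro v hv
      rcases Finset.mem_union.mp hv with hv1 | hv1
      · exact Finset.disjoint_left.mp (hdF x' (by simp [hx']))
          (Finset.mem_of_mem_erase hv1)
      · exact Finset.disjoint_left.mp (List.rel_of_pairwise_cons hpw hx') hv1
    · rw [hfv]
      exact Finset.mem_union_left _ (Finset.mem_erase.mpr ⟨hyx, hyF⟩)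
    · rw [hfv, Finset.disjoint_right]
      intro v hv
      rcases Finset.mem_erase.mp hv with ⟨hvy, hv2⟩
      rcases Finset.mem_union.mp hv2 with hv3 | hv3
      · exact fun hvH => Finset.disjoint_right.mp hdHF
          (Finset.mem_erase.mpr ⟨hvy, (Finset.mem_erase.mp hv3).2⟩) hvH
      · exact fun hvH => Finset.disjoint_right.mp hdgH hvH hv3

lemma totalComp_totalComp_swap (O : CyclicOperad) (g : ℕ → O.Op) (b : ℕ → ℕ)
    (h : ℕ → O.Op) (c : ℕ → ℕ) (xs : List ℕ) :
    ∀ (l : List ℕ) (F : O.Op), xs.Nodup →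
      List.Pairwise (fun x x' =>
        Disjoint ((O.fv (g x)).erase (b x)) ((O.fv (g x')).erase (b x'))) xs →
      l.Nodup →
      List.Pairwise (fun y y' =>
        Disjoint ((O.fv (h y)).erase (c y)) ((O.fv (h y')).erase (c y'))) l →
      (∀ x ∈ xs, x ∈ O.fv F) → (∀ x ∈ xs, b x ∈ O.fv (g x)) →
      (∀ x ∈ xs, Disjoint (O.fv F) ((O.fv (g x)).erase (b x))) →
      (∀ y ∈ l, y ∈ O.fv F) → (∀ y ∈ l, y ∉ xs) → (∀ y ∈ l, c y ∈ O.fv (h y)) →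
      (∀ y ∈ l, Disjoint ((O.fv (h y)).erase (c y)) ((O.fv F).erase y)) →
      (∀ y ∈ l, ∀ x ∈ xs, Disjoint ((O.fv (h y)).erase (c y)) ((O.fv (g x)).erase y)) →
      totalComp O (totalComp O F g b xs) h c l
        = totalComp O (totalComp O F h c l) g b xs
  | [], F, _, _, _, _, _, _, _, _, _, _, _, _ => rfl
  | y :: l, F, hndx, hgp, hndl, hhp, hmemx, hb, hdgF, hmemy, hyxs, hc', hdhF, hdhg => by
    obtain ⟨hyl, hndl'⟩ := List.nodup_cons.mp hndl
    have hyF : y ∈ O.fv F := hmemy y (by simp)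
    have hcy : c y ∈ O.fv (h y) := hc' y (by simp)
    have hyxs0 : y ∉ xs := hyxs y (by simp)
    have hfv : O.fv (O.comp F y (c y) (h y))
        = (O.fv F).erase y ∪ (O.fv (h y)).erase (c y) :=
      O.fv_comp _ _ _ _ hyF hcy (hdhF y (by simp)).symm
    have hdHg : ∀ x ∈ xs, Disjoint ((O.fv (h y)).erase (c y)) ((O.fv (g x)).erase (b x)) := by
      intro x hx
      rw [Finset.disjoint_right]
      intro v hv
      have hvy : v ≠ y := fun e => Finset.disjoint_left.mp (hdgF x hx) (e ▸ hyF) (e ▸ hv)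
      exact fun hvH => Finset.disjoint_left.mp (hdhg y (by simp) x hx) hvH
        (Finset.mem_erase.mpr ⟨hvy, Finset.mem_of_mem_erase hv⟩)
    rw [totalComp_cons,
      comp_totalComp_swap O g b (h y) y (c y) xs F hndx hgp hmemx hb hdgF
        (hdhg y (by simp)) hyF hyxs0 hcy (hdhF y (by simp))]
    rw [totalComp_totalComp_swap O g b h c xs l (O.comp F y (c y) (h y)) hndx hgp hndl'
      hhp.of_cons ?_ hb ?_ ?_ (fun y' hy' => hyxs y' (by simp [hy']))
      (fun y' hy' => hc' y' (by simp [hy'])) ?_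
      (fun y' hy' => hdhg y' (by simp [hy']))]
    rfl
    · intro x hx; rw [hfv]
      exact Finset.mem_union_left _ (Finset.mem_erase.mpr
        ⟨fun e => hyxs0 (e ▸ hx), hmemx x hx⟩)
    · intro x hx; rw [hfv]
      exact Finset.disjoint_union_left.mpr
        ⟨(hdgF x hx).mono_left (Finset.erase_subset _ _), hdHg x hx⟩
    · intro y' hy'; rw [hfv]
      exact Finset.mem_union_left _ (Finset.mem_erase.mpr
        ⟨fun e => hyl (e ▸ hy'), hmemy y' (by simp [hy'])⟩)
    · intro y' hy'; rw [hfv, Finset.disjoint_right]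
      intro v hv
      rcases Finset.mem_erase.mp hv with ⟨hvy', hv2⟩
      rcases Finset.mem_union.mp hv2 with hv3 | hv3
      · exact fun hvH => Finset.disjoint_right.mp (hdhF y' (by simp [hy']))
          (Finset.mem_erase.mpr ⟨hvy', (Finset.mem_erase.mp hv3).2⟩) hvH
      · exact fun hvH => Finset.disjoint_left.mp
          (List.rel_of_pairwise_cons hhp hy') hv3 hvH

lemma totalComp_comp_inner (O : CyclicOperad) (h : ℕ → O.Op) (c : ℕ → ℕ)
    (f : O.Op) (x xb : ℕ) :
    ∀ (l : List ℕ) (G : O.Op), l.Nodup →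
      List.Pairwise (fun y y' =>
        Disjoint ((O.fv (h y)).erase (c y)) ((O.fv (h y')).erase (c y'))) l →
      x ∈ O.fv f → xb ∈ O.fv G →
      Disjoint ((O.fv f).erase x) ((O.fv G).erase xb) →
      (∀ y ∈ l, y ∈ O.fv G) → (∀ y ∈ l, y ≠ xb) → (∀ y ∈ l, c y ∈ O.fv (h y)) →
      (∀ y ∈ l, Disjoint ((O.fv (h y)).erase (c y)) ((O.fv f).erase x)) →
      (∀ y ∈ l, Disjoint ((O.fv (h y)).erase (c y)) ((O.fv G).erase y)) →
      totalComp O (O.comp f x xb G) h c l = O.comp f x xb (totalComp O G h c l)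
  | [], G, _, _, _, _, _, _, _, _, _, _ => rfl
  | y :: l, G, hnd, hhp, hxf, hxbG, hdfG, hmem, hnxb, hc', hdhf, hdhG => by
    obtain ⟨hyl, hnd'⟩ := List.nodup_cons.mp hnd
    have hyG : y ∈ O.fv G := hmem y (by simp)
    have hcy : c y ∈ O.fv (h y) := hc' y (by simp)
    have hybx : xb ≠ y := fun e => hnxb y (by simp) e.symm
    have hfvG : O.fv (O.comp G y (c y) (h y))
        = (O.fv G).erase y ∪ (O.fv (h y)).erase (c y) :=
      O.fv_comp _ _ _ _ hyG hcy (hdhG y (by simp)).symm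
    rw [totalComp_cons,
      O.A1 f G (h y) x xb y (c y) hxf hxbG hyG hcy hybx hdfG
        (hdhG y (by simp)).symm (hdhf y (by simp)).symm]
    exact totalComp_comp_inner O h c f x xb l (O.comp G y (c y) (h y)) hnd'
      hhp.of_cons hxf
      (by rw [hfvG]; exact Finset.mem_union_left _ (Finset.mem_erase.mpr ⟨hybx, hxbG⟩))
      (by
        rw [hfvG, Finset.disjoint_right]
        intro v hv
        rcases Finset.mem_erase.mp hv with ⟨hvxb, hv2⟩
        rcases Finset.mem_union.mp hv2 with hv3 | hv3
        · exact fun hvf => Finset.disjoint_right.mp hdfG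
            (Finset.mem_erase.mpr ⟨hvxb, (Finset.mem_erase.mp hv3).2⟩) hvf
        · exact fun hvf => Finset.disjoint_left.mp (hdhf y (by simp)) hv3 hvf)
      (by
        intro y' hy'; rw [hfvG]
        exact Finset.mem_union_left _ (Finset.mem_erase.mpr
          ⟨fun e => hyl (e ▸ hy'), hmem y' (by simp [hy'])⟩))
      (fun y' hy' => hnxb y' (by simp [hy']))
      (fun y' hy' => hc' y' (by simp [hy']))
      (fun y' hy' => hdhf y' (by simp [hy']))
      (by
        intro y' hy'; rw [hfvG, Finset.disjoint_right]
        intro v hv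
        rcases Finset.mem_erase.mp hv with ⟨hvy', hv2⟩
        rcases Finset.mem_union.mp hv2 with hv3 | hv3
        · exact fun hvH => Finset.disjoint_right.mp (hdhG y' (by simp [hy']))
            (Finset.mem_erase.mpr ⟨hvy', (Finset.mem_erase.mp hv3).2⟩) hvH
        · exact fun hvH => Finset.disjoint_left.mp
            (List.rel_of_pairwise_cons hhp hy') hv3 hvH)

theorem totalComp_totalComp_aux (O : CyclicOperad) (g : ℕ → O.Op) (b : ℕ → ℕ)
    (h : ℕ → O.Op) (c : ℕ → ℕ) (ysx : ℕ → List ℕ) :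
    ∀ (xs : List ℕ) (f : O.Op) (ys : List ℕ),
      xs.Nodup → xs.toFinset ⊆ O.fv f →
      (∀ x ∈ xs, b x ∈ O.fv (g x)) →
      List.Pairwise (fun x y =>
        Disjoint ((O.fv (g x)).erase (b x)) ((O.fv (g y)).erase (b y))) xs →
      (∀ x ∈ xs, Disjoint (O.fv f) ((O.fv (g x)).erase (b x))) →
      ys.Nodup →
      (∀ v, v ∈ ys ↔ ∃ x ∈ xs, v ∈ (O.fv (g x)).erase (b x)) →
      (∀ x ∈ xs, (ysx x).Nodup ∧ ∀ v, v ∈ ysx x ↔ v ∈ (O.fv (g x)).erase (b x)) →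
      (∀ y ∈ ys, c y ∈ O.fv (h y)) →
      List.Pairwise (fun y y' =>
        Disjoint ((O.fv (h y)).erase (c y)) ((O.fv (h y')).erase (c y'))) ys →
      (∀ y ∈ ys, Disjoint ((O.fv (h y)).erase (c y)) (O.fv f)) →
      (∀ y ∈ ys, ∀ x ∈ xs,
        Disjoint ((O.fv (h y)).erase (c y)) ((O.fv (g x)).erase y)) →
      totalComp O (totalComp O f g b xs) h c ys
        = totalComp O f (fun x => totalComp O (g x) h c (ysx x)) b xs
  | [], f, ys, _, _, _, _, _, _, hyenum, _, _, _, _, _ => by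
    have : ys = [] := List.eq_nil_iff_forall_not_mem.mpr (by
      intro v hv; rcases (hyenum v).mp hv with ⟨x, hx, _⟩; simp at hx)
    subst this; rfl
  | x :: xs', f, ys, hnd, henum, hb, hgpair, hdf, hynd, hyenum, hysx, hc,
      hhpair, hhf, hhg => by
    obtain ⟨hxl, hnd'⟩ := List.nodup_cons.mp hnd
    have hx : x ∈ O.fv f := henum (by simp)
    have hbx : b x ∈ O.fv (g x) := hb x (by simp)
    have hdfx : Disjoint (O.fv f) ((O.fv (g x)).erase (b x)) := hdf x (by simp)
    have hfv₁ : O.fv (O.comp f x (b x) (g x))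
        = (O.fv f).erase x ∪ (O.fv (g x)).erase (b x) :=
      O.fv_comp _ _ _ _ hx hbx (hdfx.mono_left (Finset.erase_subset _ _))
    set f₁ := O.comp f x (b x) (g x) with hf₁
    have hxs'f : ∀ x' ∈ xs', x' ∈ (O.fv f).erase x := by
      intro x' hx'
      exact Finset.mem_erase.mpr ⟨fun e => hxl (e ▸ hx'), henum (by simp [hx'])⟩
    have hdf₁ : ∀ x' ∈ xs', Disjoint (O.fv f₁) ((O.fv (g x')).erase (b x')) := by
      intro x' hx'; rw [hfv₁]
      exact Finset.disjoint_union_left.mpr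
        ⟨(hdf x' (by simp [hx'])).mono_left (Finset.erase_subset _ _),
         List.rel_of_pairwise_cons hgpair hx'⟩
    have hhall : ∀ ⦃y : ℕ⦄, y ∈ ys → ∀ ⦃y' : ℕ⦄, y' ∈ ys → y ≠ y' →
        Disjoint ((O.fv (h y)).erase (c y)) ((O.fv (h y')).erase (c y')) :=
      by
        haveI : Std.Symm (fun y y' : ℕ =>
            Disjoint ((O.fv (h y)).erase (c y)) ((O.fv (h y')).erase (c y'))) :=
          ⟨fun _ _ hd => hd.symm⟩
        exact List.Pairwise.forall hhpair
    have hhsub : ∀ {l : List ℕ}, l.Nodup → (∀ v ∈ l, v ∈ ys) →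
        List.Pairwise (fun y y' =>
          Disjoint ((O.fv (h y)).erase (c y)) ((O.fv (h y')).erase (c y'))) l := by
      intro l hl hsub
      exact List.Pairwise.imp_of_mem
        (fun {a a'} ha ha' hne => hhall (hsub a ha) (hsub a' ha') hne) hl
    obtain ⟨hysnd, hysmem⟩ := hysx x (by simp)
    have hysys : ∀ v ∈ ysx x, v ∈ ys := by
      intro v hv
      exact (hyenum v).mpr ⟨x, by simp, (hysmem v).mp hv⟩
    -- entries of g x are not entries of f (hence not in xs')
    have hsxf : ∀ v ∈ (O.fv (g x)).erase (b x), v ∉ O.fv f :=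
      fun v hv hvf => Finset.disjoint_left.mp hdfx hvf hv
    set ys' := ys.filter (fun v => decide (v ∉ (O.fv (g x)).erase (b x))) with hys'
    have hys'mem : ∀ v, v ∈ ys' ↔ v ∈ ys ∧ v ∉ (O.fv (g x)).erase (b x) := by
      intro v; simp only [hys', List.mem_filter, decide_eq_true_eq]
    have hys'nd : ys'.Nodup := hynd.filter _
    have hyenum' : ∀ v, v ∈ ys' ↔ ∃ x' ∈ xs', v ∈ (O.fv (g x')).erase (b x') := by
      intro v
      rw [hys'mem]
      constructor
      · rintro ⟨hv1, hv2⟩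
        rcases (hyenum v).mp hv1 with ⟨x'', hx'', hv3⟩
        rcases List.mem_cons.mp hx'' with e | hx''
        · exact absurd (e ▸ hv3) hv2
        · exact ⟨x'', hx'', hv3⟩
      · rintro ⟨x', hx', hv⟩
        refine ⟨(hyenum v).mpr ⟨x', by simp [hx'], hv⟩, fun hvx =>
          Finset.disjoint_left.mp (List.rel_of_pairwise_cons hgpair hx') hvx hv⟩
    have hperm : ys.Perm (ysx x ++ ys') := by
      rw [List.perm_ext_iff_of_nodup hynd]
      · intro v
        rw [List.mem_append, hys'mem, hysmem]
        constructor
        · intro hv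
          by_cases hvsx : v ∈ (O.fv (g x)).erase (b x)
          · exact Or.inl hvsx
          · exact Or.inr ⟨hv, hvsx⟩
        · rintro (hv | ⟨hv, _⟩)
          · exact (hyenum v).mpr ⟨x, by simp, hv⟩
          · exact hv
      · refine hysnd.append hys'nd ?_
        intro v hv hv'
        exact ((hys'mem v).mp hv').2 ((hysmem v).mp hv)
    set F := totalComp O f₁ g b xs' with hF
    have hfvF : O.fv F = (O.fv f₁ \ xs'.toFinset)
        ∪ xs'.toFinset.biUnion (fun x' => (O.fv (g x')).erase (b x')) :=
      fv_totalComp O g b xs' f₁ hnd'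
        (fun x' hx' => by rw [hfv₁]; exact Finset.mem_union_left _ (hxs'f x' hx'))
        (fun x' hx' => hb x' (by simp [hx'])) hgpair.of_cons
        (fun x' hx' => (hdf₁ x' hx').symm.mono_right (Finset.erase_subset _ _))
    -- membership of ys in fv F
    have hymemF : ∀ y ∈ ys, y ∈ O.fv F := by
      intro y hy
      rcases (hyenum y).mp hy with ⟨x'', hx'', hy3⟩
      rw [hfvF]
      rcases List.mem_cons.mp hx'' with e | hx''
      · refine Finset.mem_union_left _ (Finset.mem_sdiff.mpr ⟨?_, ?_⟩)
        · rw [hfv₁]; exact Finset.mem_union_right _ (e ▸ hy3)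
        · intro hyl
          exact hsxf y (e ▸ hy3)
            (Finset.mem_of_mem_erase (hxs'f y (List.mem_toFinset.mp hyl)))
      · exact Finset.mem_union_right _ (Finset.mem_biUnion.mpr ⟨x'', by simp [hx''], hy3⟩)
    -- Disjointness of h-sets from fv F minus the own entry
    have hdisF : ∀ y ∈ ys, Disjoint ((O.fv (h y)).erase (c y)) ((O.fv F).erase y) := by
      intro y hy
      rw [Finset.disjoint_right]
      intro v hv
      rcases Finset.mem_erase.mp hv with ⟨hvy, hv2⟩
      rw [hfvF] at hv2
      rcases Finset.mem_union.mp hv2 with hv3 | hv3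
      · have hv4 := (Finset.mem_sdiff.mp hv3).1
        rw [hfv₁] at hv4
        rcases Finset.mem_union.mp hv4 with hv5 | hv5
        · exact fun hvH => Finset.disjoint_right.mp (hhf y hy)
            (Finset.mem_of_mem_erase hv5) hvH
        · exact fun hvH => Finset.disjoint_right.mp (hhg y hy x (by simp))
            (Finset.mem_erase.mpr ⟨hvy, Finset.mem_of_mem_erase hv5⟩) hvH
      · rcases Finset.mem_biUnion.mp hv3 with ⟨x', hx', hv5⟩
        exact fun hvH => Finset.disjoint_right.mp
          (hhg y hy x' (by simp [List.mem_toFinset.mp hx']))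
          (Finset.mem_erase.mpr ⟨hvy, Finset.mem_of_mem_erase hv5⟩) hvH
    have step1 : totalComp O F h c ys = totalComp O F h c (ysx x ++ ys') :=
      totalComp_perm O h c hperm F hynd hymemF hc hhpair hdisF
    have step2 : totalComp O F h c (ysx x ++ ys')
        = totalComp O (totalComp O F h c (ysx x)) h c ys' := by
      simp [totalComp, List.foldl_append]
    have hhpx := hhsub hysnd hysys
    have hysnotxs : ∀ y ∈ ysx x, y ∉ xs' := fun y hy hyxs =>
      hsxf y ((hysmem y).mp hy) (Finset.mem_of_mem_erase (hxs'f y hyxs))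
    have step3 : totalComp O F h c (ysx x)
        = totalComp O (totalComp O f₁ h c (ysx x)) g b xs' :=
      totalComp_totalComp_swap O g b h c xs' (ysx x) f₁ hnd' hgpair.of_cons hysnd hhpx
        (fun x' hx' => by rw [hfv₁]; exact Finset.mem_union_left _ (hxs'f x' hx'))
        (fun x' hx' => hb x' (by simp [hx']))
        hdf₁
        (fun y hy => by rw [hfv₁]; exact Finset.mem_union_right _ ((hysmem y).mp hy))
        hysnotxs
        (fun y hy => hc y (hysys y hy))
        (fun y hy => by
          rw [hfv₁, Finset.disjoint_right]
          intro v hv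
          rcases Finset.mem_erase.mp hv with ⟨hvy, hv2⟩
          rcases Finset.mem_union.mp hv2 with hv3 | hv3
          · exact fun hvH => Finset.disjoint_right.mp (hhf y (hysys y hy))
              (Finset.mem_of_mem_erase hv3) hvH
          · exact fun hvH => Finset.disjoint_right.mp (hhg y (hysys y hy) x (by simp))
              (Finset.mem_erase.mpr ⟨hvy, Finset.mem_of_mem_erase hv3⟩) hvH)
        (fun y hy x' hx' => hhg y (hysys y hy) x' (by simp [hx']))
    set Gx := totalComp O (g x) h c (ysx x) with hGx
    have step4 : totalComp O f₁ h c (ysx x) = O.comp f x (b x) Gx :=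
      totalComp_comp_inner O h c f x (b x) (ysx x) (g x) hysnd hhpx hx hbx
        (hdfx.mono_left (Finset.erase_subset _ _))
        (fun y hy => Finset.mem_of_mem_erase ((hysmem y).mp hy))
        (fun y hy => (Finset.mem_erase.mp ((hysmem y).mp hy)).1)
        (fun y hy => hc y (hysys y hy))
        (fun y hy => (hhf y (hysys y hy)).mono_right (Finset.erase_subset _ _))
        (fun y hy => hhg y (hysys y hy) x (by simp))
    have hfvGx : O.fv Gx = (O.fv (g x) \ (ysx x).toFinset)
        ∪ (ysx x).toFinset.biUnion (fun y => (O.fv (h y)).erase (c y)) :=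
      fv_totalComp O h c (ysx x) (g x) hysnd
        (fun y hy => Finset.mem_of_mem_erase ((hysmem y).mp hy))
        (fun y hy => hc y (hysys y hy)) hhpx
        (fun y hy => hhg y (hysys y hy) x (by simp))
    have hbGx : b x ∈ O.fv Gx := by
      rw [hfvGx]
      refine Finset.mem_union_left _ (Finset.mem_sdiff.mpr ⟨hbx, fun hbl => ?_⟩)
      exact absurd ((hysmem (b x)).mp (List.mem_toFinset.mp hbl)) (by simp)
    have hGsub : (O.fv Gx).erase (b x)
        ⊆ (ysx x).toFinset.biUnion (fun y => (O.fv (h y)).erase (c y)) := by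
      intro v hv
      rcases Finset.mem_erase.mp hv with ⟨hvb, hv2⟩
      rw [hfvGx] at hv2
      rcases Finset.mem_union.mp hv2 with hv3 | hv3
      · rcases Finset.mem_sdiff.mp hv3 with ⟨hvg, hvl⟩
        exact absurd (List.mem_toFinset.mpr
          ((hysmem v).mpr (Finset.mem_erase.mpr ⟨hvb, hvg⟩))) hvl
      · exact hv3
    have hdisHg' : ∀ y ∈ ysx x, ∀ x' ∈ xs',
        Disjoint ((O.fv (h y)).erase (c y)) ((O.fv (g x')).erase (b x')) := by
      intro y hy x' hx'
      rw [Finset.disjoint_right]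
      intro v hv
      have hvy : v ≠ y := fun e => Finset.disjoint_left.mp
        (List.rel_of_pairwise_cons hgpair hx') ((hysmem y).mp hy) (e ▸ hv)
      exact fun hvH => Finset.disjoint_left.mp (hhg y (hysys y hy) x' (by simp [hx']))
        hvH (Finset.mem_erase.mpr ⟨hvy, Finset.mem_of_mem_erase hv⟩)
    have hdfGx : Disjoint ((O.fv f).erase x) ((O.fv Gx).erase (b x)) := by
      rw [Finset.disjoint_right]
      intro v hv
      rcases Finset.mem_biUnion.mp (hGsub hv) with ⟨y, hy, hvH⟩
      exact fun hvf => Finset.disjoint_left.mp (hhf y (hysys y (List.mem_toFinset.mp hy)))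
        hvH (Finset.mem_of_mem_erase hvf)
    have hfv₂ : O.fv (O.comp f x (b x) Gx)
        = (O.fv f).erase x ∪ (O.fv Gx).erase (b x) :=
      O.fv_comp _ _ _ _ hx hbGx hdfGx
    have hIH := totalComp_totalComp_aux O g b h c ysx xs' (O.comp f x (b x) Gx) ys'
      hnd'
      (by
        intro v hv
        rw [hfv₂]
        exact Finset.mem_union_left _ (hxs'f v (List.mem_toFinset.mp hv)))
      (fun x' hx' => hb x' (by simp [hx']))
      hgpair.of_cons
      (by
        intro x' hx'
        rw [hfv₂]
        refine Finset.disjoint_union_left.mpr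
          ⟨(hdf x' (by simp [hx'])).mono_left (Finset.erase_subset _ _), ?_⟩
        rw [Finset.disjoint_left]
        intro v hv
        rcases Finset.mem_biUnion.mp (hGsub hv) with ⟨y, hy, hvH⟩
        exact fun hvg => Finset.disjoint_left.mp
          (hdisHg' y (List.mem_toFinset.mp hy) x' hx') hvH hvg)
      hys'nd
      hyenum'
      (fun x' hx' => hysx x' (by simp [hx']))
      (fun y hy => hc y ((hys'mem y).mp hy).1)
      (List.Pairwise.sublist (hys' ▸ List.filter_sublist (l := ys)) hhpair)
      (by
        intro y hy
        rcases (hys'mem y).mp hy with ⟨hy1, hy2⟩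
        rw [hfv₂]
        refine Finset.disjoint_union_right.mpr
          ⟨(hhf y hy1).mono_right (Finset.erase_subset _ _), ?_⟩
        rw [Finset.disjoint_right]
        intro v hv
        rcases Finset.mem_biUnion.mp (hGsub hv) with ⟨y', hy', hvH⟩
        have hy'x := List.mem_toFinset.mp hy'
        have hne : y ≠ y' := fun e => hy2 (e ▸ (hysmem y').mp hy'x)
        exact fun hvh => Finset.disjoint_left.mp (hhall hy1 (hysys y' hy'x) hne) hvh hvH)
      (fun y hy x' hx' => hhg y ((hys'mem y).mp hy).1 x' (by simp [hx']))
    calc totalComp O (totalComp O f g b (x :: xs')) h c ys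
        = totalComp O F h c ys := rfl
      _ = totalComp O F h c (ysx x ++ ys') := step1
      _ = totalComp O (totalComp O F h c (ysx x)) h c ys' := step2
      _ = totalComp O (totalComp O (O.comp f x (b x) Gx) g b xs') h c ys' := by
          rw [step3, step4]
      _ = totalComp O (O.comp f x (b x) Gx)
            (fun x' => totalComp O (g x') h c (ysx x')) b xs' := hIH
      _ = totalComp O f (fun x' => totalComp O (g x') h c (ysx x')) b (x :: xs') := by
          rw [totalComp_cons, hGx]

/-- (Lemma 1 (b)) Total compositions compose: `f(φ)(ψ) = f(φ_ψ)`, where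
`φ : x ↦ (g x, b x)` on the entries `xs` of `f`, `ψ : y ↦ (h y, c y)` on the entries
`ys` of `f(φ)`, and `φ_ψ : x ↦ (g_x^{ψ_{x̲}}, b x)` with `g_x^{ψ_{x̲}}` the total
composition of `g x` with the restriction of `ψ` to its entries `ysx x`. -/
theorem totalComp_totalComp (O : CyclicOperad) (f : O.Op) (g : ℕ → O.Op) (b : ℕ → ℕ)
    (h : ℕ → O.Op) (c : ℕ → ℕ) (xs ys : List ℕ) (ysx : ℕ → List ℕ)
    (hnd : xs.Nodup) (henum : xs.toFinset = O.fv f)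
    (hb : ∀ x ∈ xs, b x ∈ O.fv (g x))
    (hgpair : List.Pairwise
      (fun x y => Disjoint ((O.fv (g x)).erase (b x)) ((O.fv (g y)).erase (b y))) xs)
    (hdf : ∀ x ∈ xs, Disjoint (O.fv f) ((O.fv (g x)).erase (b x)))
    (hynd : ys.Nodup)
    (hyenum : ∀ v, v ∈ ys ↔ ∃ x ∈ xs, v ∈ (O.fv (g x)).erase (b x))
    (hysx : ∀ x ∈ xs, (ysx x).Nodup ∧ ∀ v, v ∈ ysx x ↔ v ∈ (O.fv (g x)).erase (b x))
    (hc : ∀ y ∈ ys, c y ∈ O.fv (h y))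
    (hhpair : List.Pairwise
      (fun y y' => Disjoint ((O.fv (h y)).erase (c y)) ((O.fv (h y')).erase (c y'))) ys)
    (hhf : ∀ y ∈ ys, Disjoint ((O.fv (h y)).erase (c y)) (O.fv f))
    (hhg : ∀ y ∈ ys, ∀ x ∈ xs,
      Disjoint ((O.fv (h y)).erase (c y)) ((O.fv (g x)).erase y)) :
    totalComp O (totalComp O f g b xs) h c ys
      = totalComp O f (fun x => totalComp O (g x) h c (ysx x)) b xs := by
  exact totalComp_totalComp_aux O g b h c ysx xs f ys hnd (le_of_eq henum) hb hgpair
    hdf hynd hyenum hysx hc hhpair hhf hhg
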